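/- Let N ≥ 2, z ≥ 0 an integer, λ a partition of N - z with l parts, and let r be an integer with N/2 < r < N. If z > 0 or λ_1 > 1, then z(z-1)/(2r) + Σ_i λ_i(λ_i - 1)/(4r) < (N - l)/2 + max(0, z - r). -/

import Mathlib

open Finset BigOperators

/-- Inequality (6.1) of Theorem 5.4. -/
theorem stmt_16 (N z l r : ℕ) (hN : 2 ≤ N) (hzN : z ≤ N)
    (hr1 : N < 2 * r) (hr2 : r < N)
    (lam : Fin l → ℕ)
    (hmono : ∀ i j : Fin l, i ≤ j → lam j ≤ lam i)
    (hpos : ∀ i, 0 < lam i)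
    (hsum : (∑ i, lam i) + z = N)
    (hcond : 0 < z ∨ ∃ hl : 0 < l, 1 < lam ⟨0, hl⟩) :
    (z : ℝ) * ((z : ℝ) - 1) / (2 * r)
      + ∑ i, (lam i : ℝ) * ((lam i : ℝ) - 1) / (4 * r)
      < ((N : ℝ) - l) / 2 + ((max 0 ((z : ℤ) - r) : ℤ) : ℝ) := by
  have hrn : 2 ≤ r := by omega
  have hr0 : (0:ℝ) < r := by exact_mod_cast Nat.pos_of_ne_zero (by omega)
  have hS : (∑ i, (lam i:ℝ)) + (z:ℝ) = N := by exact_mod_cast hsum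
  have hlamN : ∀ i : Fin l, lam i ≤ N := by
    intro i
    have h := Finset.single_le_sum (f := fun j => lam j)
      (fun j _ => Nat.zero_le _) (Finset.mem_univ i)
    omega
  have hterm : ∀ i : Fin l,
      (lam i:ℝ) * ((lam i:ℝ) - 1) / (4*r) ≤ ((lam i:ℝ) - 1) / 2 := by
    intro i
    have h1 : (1:ℝ) ≤ lam i := by exact_mod_cast hpos i
    have h2 : (lam i:ℝ) < 2*r := by exact_mod_cast lt_of_le_of_lt (hlamN i) hr1
    rw [div_le_div_iff₀ (by positivity) (by norm_num)]
    nlinarith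
  have htermS : ∀ i : Fin l, 1 < lam i →
      (lam i:ℝ) * ((lam i:ℝ) - 1) / (4*r) < ((lam i:ℝ) - 1) / 2 := by
    intro i hi
    have h1 : (1:ℝ) < lam i := by exact_mod_cast hi
    have h2 : (lam i:ℝ) < 2*r := by exact_mod_cast lt_of_le_of_lt (hlamN i) hr1
    rw [div_lt_div_iff₀ (by positivity) (by norm_num)]
    nlinarith
  have hsum_eq : ∑ i : Fin l, ((lam i:ℝ) - 1) / 2 = ((N:ℝ) - z - l) / 2 := by
    rw [← Finset.sum_div, Finset.sum_sub_distrib]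
    simp only [Finset.sum_const, Finset.card_univ, Fintype.card_fin, nsmul_eq_mul, mul_one]
    rw [show (∑ i : Fin l, (lam i:ℝ)) = (N:ℝ) - z by linarith]
  rcases le_or_gt z r with hzr | hzr
  · -- max term is 0
    have hmax : ((max 0 ((z:ℤ) - r) : ℤ) : ℝ) = 0 := by
      rw [max_eq_left (by omega : (z:ℤ) - r ≤ 0)]; norm_num
    rw [hmax]
    rcases Nat.eq_zero_or_pos z with hz0 | hz0
    · -- z = 0, strictness from lam
      obtain ⟨hl, hlam1⟩ := hcond.resolve_left (by omega)
      have hstrict : ∑ i, (lam i:ℝ) * ((lam i:ℝ) - 1) / (4*r)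
          < ∑ i : Fin l, ((lam i:ℝ) - 1) / 2 :=
        Finset.sum_lt_sum (fun i _ => hterm i)
          ⟨⟨0, hl⟩, Finset.mem_univ _, htermS _ hlam1⟩
      have hz0' : (z:ℝ) = 0 := by exact_mod_cast hz0
      rw [hsum_eq] at hstrict
      rw [hz0'] at hS ⊢
      rw [zero_mul, zero_div]
      linarith
    · have hz1 : (1:ℝ) ≤ z := by exact_mod_cast hz0
      have hzr' : (z:ℝ) ≤ r := by exact_mod_cast hzr
      have hzt : (z:ℝ) * ((z:ℝ) - 1) / (2*r) < (z:ℝ) / 2 := by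
        rw [div_lt_div_iff₀ (by positivity) (by norm_num)]
        nlinarith
      have hle : ∑ i, (lam i:ℝ) * ((lam i:ℝ) - 1) / (4*r) ≤ ((N:ℝ) - z - l) / 2 := by
        rw [← hsum_eq]; exact Finset.sum_le_sum (fun i _ => hterm i)
      linarith
  · -- r < z
    have hmax : ((max 0 ((z:ℤ) - r) : ℤ) : ℝ) = (z:ℝ) - r := by
      rw [max_eq_right (by omega : (0:ℤ) ≤ (z:ℤ) - r)]; push_cast; ring
    rw [hmax]
    have hz1 : (r:ℝ) + 1 ≤ z := by exact_mod_cast hzr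
    have hz2 : (z:ℝ) ≤ 2*r - 1 := by
      have h : z + 1 ≤ 2*r := by omega
      have h' := (Nat.cast_le (α := ℝ)).mpr h
      push_cast at h'
      linarith
    have hzt : (z:ℝ) * ((z:ℝ) - 1) / (2*r) < (z:ℝ) / 2 + ((z:ℝ) - r) := by
      rw [div_lt_iff₀ (by positivity)]
      nlinarith [mul_nonneg (by linarith : (0:ℝ) ≤ (z:ℝ) - r - 1)
        (by linarith : (0:ℝ) ≤ 2*r - 1 - z)]
    have hle : ∑ i, (lam i:ℝ) * ((lam i:ℝ) - 1) / (4*r) ≤ ((N:ℝ) - z - l) / 2 := by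
      rw [← hsum_eq]; exact Finset.sum_le_sum (fun i _ => hterm i)
    linarith
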